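/- arXiv:1704.07481 — 2 statements merged into one kernel-verified Lean document; each statement's English description precedes it below -/
import Mathlib

section
/- If X is a Poisson random variable with intensity λ > 0 and x ≥ 1, then P(X > x) < (1 - e^{-λ})^x. -/
open MeasureTheory ProbabilityTheory Real

private lemma poisson_summable (r : NNReal) : Summable (poissonPMFReal r) :=
  (poissonPMFRealSum r).summable

private lemma poisson_tail_summable (r : NNReal) (n : ℕ) :
    Summable (fun k => poissonPMFReal r (n + k)) := by
  simpa [add_comm] using (summable_nat_add_iff n).2 (poisson_summable r)

set_option maxHeartbeats 1000000 in
private lemma poisson_tail_le (r : NNReal) (n : ℕ) :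
    ∑' k, poissonPMFReal r (n + k) ≤ (r : ℝ) ^ n / n.factorial := by
  have hexp : HasSum (fun k : ℕ => (r : ℝ) ^ k / k.factorial) (Real.exp r) := by
    rw [Real.exp_eq_exp_ℝ]
    exact NormedSpace.expSeries_div_hasSum_exp (r : ℝ)
  have hb : Summable fun k : ℕ =>
      Real.exp (-(r : ℝ)) * ((r : ℝ) ^ n / n.factorial) * ((r : ℝ) ^ k / k.factorial) :=
    hexp.summable.mul_left _
  have hle : ∀ k, poissonPMFReal r (n + k) ≤
      Real.exp (-(r : ℝ)) * ((r : ℝ) ^ n / n.factorial) * ((r : ℝ) ^ k / k.factorial) := by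
    intro k
    have h1 : ((n.factorial * k.factorial : ℕ) : ℝ) ≤ ((n + k).factorial : ℝ) := by
      exact_mod_cast Nat.le_of_dvd (n + k).factorial_pos
        (Nat.factorial_mul_factorial_dvd_factorial_add n k)
    have h2 : (0:ℝ) < (n.factorial * k.factorial : ℕ) := by positivity
    calc poissonPMFReal r (n + k)
        = Real.exp (-(r : ℝ)) * (r : ℝ) ^ (n + k) / ((n + k).factorial : ℝ) := rfl
      _ ≤ Real.exp (-(r : ℝ)) * (r : ℝ) ^ (n + k) / ((n.factorial * k.factorial : ℕ) : ℝ) := by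
          gcongr
      _ = Real.exp (-(r : ℝ)) * ((r : ℝ) ^ n / n.factorial) * ((r : ℝ) ^ k / k.factorial) := by
          push_cast
          rw [pow_add]
          ring
  calc ∑' k, poissonPMFReal r (n + k)
      ≤ ∑' k, Real.exp (-(r : ℝ)) * ((r : ℝ) ^ n / n.factorial) * ((r : ℝ) ^ k / k.factorial) :=
        (poisson_tail_summable r n).tsum_le_tsum hle hb
    _ = Real.exp (-(r : ℝ)) * ((r : ℝ) ^ n / n.factorial) * Real.exp (r : ℝ) :=
        (hexp.mul_left _).tsum_eq
    _ = (r : ℝ) ^ n / n.factorial := by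
        rw [Real.exp_neg]
        field_simp

private lemma poisson_tail_succ (r : NNReal) (n : ℕ) :
    ∑' k, poissonPMFReal r (n + k) = poissonPMFReal r n + ∑' k, poissonPMFReal r (n + 1 + k) := by
  rw [(poisson_tail_summable r n).tsum_eq_zero_add, Nat.add_zero]
  congr 1
  exact tsum_congr fun k => by rw [show n + (k + 1) = n + 1 + k by omega]

private lemma poisson_tail_bound (r : NNReal) (n : ℕ) :
    ∑' k, poissonPMFReal r (n + k) ≤ (1 - Real.exp (-(r : ℝ))) ^ n := by
  induction n with
  | zero => simpa using poisson_tail_le r 0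
  | succ n ih =>
    have hrec := poisson_tail_succ r n
    have hT0 : 0 ≤ ∑' k, poissonPMFReal r (n + k) :=
      tsum_nonneg fun _ => poissonPMFReal_nonneg
    have hp : Real.exp (-(r : ℝ)) * ∑' k, poissonPMFReal r (n + k) ≤ poissonPMFReal r n := by
      calc Real.exp (-(r : ℝ)) * ∑' k, poissonPMFReal r (n + k)
          ≤ Real.exp (-(r : ℝ)) * ((r : ℝ) ^ n / n.factorial) :=
            mul_le_mul_of_nonneg_left (poisson_tail_le r n) (Real.exp_pos _).le
        _ = poissonPMFReal r n := by
            unfold poissonPMFReal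
            ring
    have hb0 : 0 ≤ 1 - Real.exp (-(r : ℝ)) := by
      have : Real.exp (-(r : ℝ)) ≤ 1 := Real.exp_le_one_iff.2 (neg_nonpos.2 r.coe_nonneg)
      linarith
    have hstep : ∑' k, poissonPMFReal r (n + 1 + k)
        ≤ (1 - Real.exp (-(r : ℝ))) * ∑' k, poissonPMFReal r (n + k) := by
      nlinarith [hrec, hp]
    calc ∑' k, poissonPMFReal r (n + 1 + k)
        ≤ (1 - Real.exp (-(r : ℝ))) * ∑' k, poissonPMFReal r (n + k) := hstep
      _ ≤ (1 - Real.exp (-(r : ℝ))) * (1 - Real.exp (-(r : ℝ))) ^ n :=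
          mul_le_mul_of_nonneg_left ih hb0
      _ = (1 - Real.exp (-(r : ℝ))) ^ (n + 1) := by ring

theorem stmt_0 {Ω : Type*} [MeasurableSpace Ω] (P : Measure Ω) [IsProbabilityMeasure P]
    (X : Ω → ℕ) (hX : Measurable X) (lam : NNReal) (hlam : 0 < lam)
    (hlaw : P.map X = ProbabilityTheory.poissonMeasure lam)
    (x : ℝ) (hx : 1 ≤ x) :
    (P {ω | x < (X ω : ℝ)}).toReal < (1 - Real.exp (-(lam : ℝ))) ^ x := by
  have hx0 : (0:ℝ) ≤ x := le_trans zero_le_one hx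
  set N : ℕ := ⌊x⌋₊ + 1 with hN
  have hsetN : {n : ℕ | x < (n : ℝ)} = {n : ℕ | N ≤ n} := by
    ext n
    simp only [Set.mem_setOf_eq, hN]
    rw [← Nat.floor_lt hx0]
    omega
  have hs : MeasurableSet {n : ℕ | x < (n : ℝ)} := MeasurableSet.of_discrete
  have hmap : P {ω | x < (X ω : ℝ)} = poissonMeasure lam {n : ℕ | x < (n : ℝ)} := by
    rw [← hlaw, Measure.map_apply hX hs]
    rfl
  let e : ℕ ≃ {n : ℕ | N ≤ n} :=
    { toFun := fun k => ⟨N + k, Nat.le_add_right _ _⟩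
      invFun := fun m => m.1 - N
      left_inv := fun k => by simp
      right_inv := fun m => Subtype.ext (Nat.add_sub_cancel' m.2) }
  have hmeas : poissonMeasure lam {n : ℕ | x < (n : ℝ)}
      = ∑' k, ENNReal.ofReal (poissonPMFReal lam (N + k)) := by
    rw [hsetN, poissonMeasure, Measure.sum_apply _ MeasurableSet.of_discrete]
    simp only [Measure.smul_apply, Measure.dirac_apply' _ MeasurableSet.of_discrete, smul_eq_mul]
    rw [tsum_congr fun i => (show ENNReal.ofReal (Real.exp (-(lam : ℝ)) * (lam : ℝ) ^ i / (i.factorial : ℝ))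
        * {n : ℕ | N ≤ n}.indicator 1 i = {n : ℕ | N ≤ n}.indicator
        (fun i : ℕ => ENNReal.ofReal (Real.exp (-(lam : ℝ)) * (lam : ℝ) ^ i / (i.factorial : ℝ))) i by
      by_cases h : N ≤ i <;> simp [h])]
    rw [← tsum_subtype, ← e.tsum_eq]
    rfl
  have htoReal : (P {ω | x < (X ω : ℝ)}).toReal = ∑' k, poissonPMFReal lam (N + k) := by
    rw [hmap, hmeas, ENNReal.tsum_toReal_eq (fun _ => ENNReal.ofReal_ne_top)]
    exact tsum_congr fun k => ENNReal.toReal_ofReal poissonPMFReal_nonneg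
  have hb1 : Real.exp (-(lam : ℝ)) < 1 := by
    rw [Real.exp_lt_one_iff]
    have : (0:ℝ) < lam := by exact_mod_cast hlam
    linarith
  have hb0 : 0 < 1 - Real.exp (-(lam : ℝ)) := by linarith
  have hbl1 : 1 - Real.exp (-(lam : ℝ)) < 1 := by
    have := Real.exp_pos (-(lam : ℝ))
    linarith
  have hxN : x < (N : ℝ) := by
    push_cast [hN]
    exact Nat.lt_floor_add_one x
  calc (P {ω | x < (X ω : ℝ)}).toReal
      = ∑' k, poissonPMFReal lam (N + k) := htoReal
    _ ≤ (1 - Real.exp (-(lam : ℝ))) ^ N := poisson_tail_bound lam N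
    _ = (1 - Real.exp (-(lam : ℝ))) ^ (N : ℝ) := (Real.rpow_natCast _ N).symm
    _ < (1 - Real.exp (-(lam : ℝ))) ^ x := Real.rpow_lt_rpow_of_exponent_gt hb0 hbl1 hxN
end

section
/- Let W be a standard Brownian motion, T̄ > 0, n ≥ 2, and define Λ_n(δ) = sup{ |W(u+h) - W(u)| : u, h ≥ 0, u+h ≤ n·T̄, h ≤ δ·log n } and Λ̄_n = sup_{0 ≤ δ ≤ n·T̄} (δ+1)^{-1/2}·Λ_n(δ). Then there exist a nonnegative random variable L_n and positive constants c, κ, λ (independent of n) such that Λ̄_n ≤ c·log n + L_n and P(L_n > x) ≤ κ·n^{-2}·exp(-λx - x²/(18·log n)) for all x ≥ 0. -/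
open MeasureTheory

/-- A standard one-dimensional Brownian motion: continuous paths starting at 0, with
Gaussian stationary increments that are independent over disjoint intervals. -/
def IsBrownianMotion {Ω : Type*} [MeasurableSpace Ω] (P : Measure Ω)
    (W : ℝ → Ω → ℝ) : Prop :=
  (∀ ω, W 0 ω = 0) ∧
  (∀ ω, Continuous fun t => W t ω) ∧
  (∀ s t : ℝ, 0 ≤ s → s ≤ t →
    P.map (fun ω => W t ω - W s ω) = ProbabilityTheory.gaussianReal 0 (Real.toNNReal (t - s))) ∧
  (∀ (m : ℕ) (u : ℕ → ℝ), Monotone u → (∀ j, 0 ≤ u j) →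
    ProbabilityTheory.iIndepFun (m := fun _ => inferInstance)
      (fun j : Fin m => fun ω => W (u (j + 1)) ω - W (u j) ω) P)

namespace BMaux

open ProbabilityTheory Real Filter
open scoped NNReal ENNReal

variable {Ω : Type*} [MeasurableSpace Ω] {P : Measure Ω}

lemma gauss_pointwise (v : ℝ≥0) (hv : v ≠ 0) (t x : ℝ) :
    gaussianPDFReal 0 v x * rexp (t * x)
      = rexp (t ^ 2 * v / 2) * gaussianPDFReal (t * v) v x := by
  have hv' : (v : ℝ) ≠ 0 := by exact_mod_cast hv
  have hexp : -(x - 0) ^ 2 / (2 * (v : ℝ)) + t * x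
      = -(x - t * (v : ℝ)) ^ 2 / (2 * (v : ℝ)) + t ^ 2 * (v : ℝ) / 2 := by
    field_simp
    ring
  simp only [gaussianPDFReal]
  rw [mul_assoc, ← Real.exp_add, hexp, Real.exp_add]
  ring

lemma gauss_density_transfer (v : ℝ≥0) (hv : v ≠ 0) (g : ℝ → ℝ) :
    (∫ x, g x ∂(gaussianReal 0 v)) = (∫ x, gaussianPDFReal 0 v x * g x) ∧
    (Integrable (fun x => gaussianPDFReal 0 v x * g x) volume →
      Integrable g (gaussianReal 0 v)) := by
  have hmeas : AEMeasurable (fun x => (gaussianPDFReal 0 v x).toNNReal) volume :=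
    (measurable_gaussianPDFReal 0 v).real_toNNReal.aemeasurable
  have hd : gaussianReal 0 v
      = volume.withDensity (fun x => ((gaussianPDFReal 0 v x).toNNReal : ℝ≥0∞)) := by
    rw [gaussianReal_of_var_ne_zero _ hv]
    rfl
  constructor
  · rw [hd, integral_withDensity_eq_integral_smul₀ hmeas]
    refine integral_congr_ae (Filter.Eventually.of_forall fun x => ?_)
    simp [NNReal.smul_def, Real.coe_toNNReal _ (gaussianPDFReal_nonneg 0 v x)]
  · intro hint
    rw [hd, integrable_withDensity_iff_integrable_coe_smul₀ hmeas]
    refine hint.congr ?_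
    filter_upwards with x
    simp [smul_eq_mul, Real.coe_toNNReal _ (gaussianPDFReal_nonneg 0 v x)]

lemma gauss_mgf (v : ℝ≥0) (hv : v ≠ 0) (t : ℝ) :
    Integrable (fun x => rexp (t * x)) (gaussianReal 0 v) ∧
      ∫ x, rexp (t * x) ∂(gaussianReal 0 v) = rexp (t ^ 2 * v / 2) := by
  obtain ⟨heq, hint⟩ := gauss_density_transfer v hv (fun x => rexp (t * x))
  have hpt : (fun x => gaussianPDFReal 0 v x * rexp (t * x))
      = fun x => rexp (t ^ 2 * v / 2) * gaussianPDFReal (t * v) v x := by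
    funext x; exact gauss_pointwise v hv t x
  constructor
  · exact hint (by rw [hpt]; exact (integrable_gaussianPDFReal (t * v) v).const_mul _)
  · rw [heq, hpt, integral_const_mul, integral_gaussianPDFReal_eq_one (t * v) hv, mul_one]

lemma gauss_tail (v : ℝ≥0) (z : ℝ) (hz : 0 ≤ z) :
    gaussianReal 0 v {x | z ≤ x} ≤ ENNReal.ofReal (rexp (-(z ^ 2) / (2 * (v : ℝ)))) := by
  by_cases hv : v = 0
  · subst hv
    rw [gaussianReal_zero_var]
    have h0 : {x : ℝ | z ≤ x} = Set.Ici z := rfl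
    rw [h0, Measure.dirac_apply' _ measurableSet_Ici]
    by_cases hz0 : z ≤ 0
    · have : z = 0 := le_antisymm hz0 hz
      subst this
      simp
    · push_neg at hz0
      rw [Set.indicator_of_notMem (by simpa using hz0)]
      simp
  · have hvpos : (0 : ℝ) < (v : ℝ) := by
      have := hv; positivity
    set t : ℝ := z / (v : ℝ) with ht
    have htnn : 0 ≤ t := div_nonneg hz hvpos.le
    obtain ⟨hint, hmgf⟩ := gauss_mgf v hv t
    have hmgf' : mgf (fun x => x) (gaussianReal 0 v) t = rexp (t ^ 2 * v / 2) := by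
      rw [mgf]; exact hmgf
    have hch := measure_ge_le_exp_mul_mgf (X := fun x : ℝ => x) (μ := gaussianReal 0 v)
      (t := t) z htnn hint
    rw [hmgf'] at hch
    have hfin : gaussianReal 0 v {x | z ≤ x} ≠ ⊤ := measure_ne_top _ _
    have : gaussianReal 0 v {x | z ≤ x}
        ≤ ENNReal.ofReal (rexp (-t * z) * rexp (t ^ 2 * v / 2)) := by
      rw [← ENNReal.ofReal_toReal hfin]
      exact ENNReal.ofReal_le_ofReal hch
    refine this.trans_eq ?_
    congr 1
    rw [← Real.exp_add]
    congr 1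
    rw [ht]
    rw [div_pow]
    field_simp
    ring

lemma gauss_map_neg (v : ℝ≥0) :
    (gaussianReal 0 v).map (fun x => -x) = gaussianReal 0 v := by
  have h := gaussianReal_map_const_mul (μ := 0) (v := v) (-1)
  have h1 : (fun x : ℝ => (-1 : ℝ) * x) = fun x => -x := by funext x; ring
  rw [h1] at h
  rw [h]
  congr 1
  · norm_num
  · apply NNReal.coe_injective
    push_cast
    norm_num

lemma gauss_half (v : ℝ≥0) : (2 : ℝ≥0∞)⁻¹ ≤ gaussianReal 0 v {x | 0 ≤ x} := by
  have hsym : gaussianReal 0 v {x : ℝ | x ≤ 0} = gaussianReal 0 v {x : ℝ | 0 ≤ x} := by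
    conv_lhs => rw [← gauss_map_neg v]
    rw [Measure.map_apply measurable_neg (by exact measurableSet_Iic)]
    congr 1
    ext x
    simp
  have hcov : (1 : ℝ≥0∞) = gaussianReal 0 v Set.univ := by simp
  have hle : gaussianReal 0 v Set.univ
      ≤ gaussianReal 0 v {x : ℝ | 0 ≤ x} + gaussianReal 0 v {x : ℝ | x ≤ 0} := by
    rw [show (Set.univ : Set ℝ) = {x : ℝ | 0 ≤ x} ∪ {x : ℝ | x ≤ 0} by
      ext x; simp [le_total]]
    exact measure_union_le _ _
  rw [hsym, ← two_mul] at hle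
  rw [← hcov] at hle
  have h2 := mul_le_mul_right hle (2⁻¹ : ℝ≥0∞)
  rw [mul_one, ← mul_assoc, ENNReal.inv_mul_cancel (by norm_num) (by norm_num), one_mul] at h2
  exact h2

/-- transfer iIndepFun along a.e. equality -/
lemma iIndepFun_congr {f g : ℕ → Ω → ℝ}
    (h : iIndepFun (m := fun _ => inferInstance) f P) (he : ∀ i, f i =ᵐ[P] g i) :
    iIndepFun (m := fun _ => inferInstance) g P := by
  rw [iIndepFun_iff_measure_inter_preimage_eq_mul] at h ⊢
  intro S sets hsets
  have hS := h S hsets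
  have h1 : ∀ i ∈ S, P (g i ⁻¹' sets i) = P (f i ⁻¹' sets i) := by
    intro i _
    refine measure_congr ?_
    filter_upwards [he i] with ω hω
    show (g i ω ∈ sets i) = (f i ω ∈ sets i)
    rw [hω]
  have h2 : P (⋂ i ∈ S, g i ⁻¹' sets i) = P (⋂ i ∈ S, f i ⁻¹' sets i) := by
    refine measure_congr ?_
    have hae : ∀ᵐ ω ∂P, ∀ i ∈ S, f i ω = g i ω := by
      rw [Finset.eventually_all]
      intro i _
      exact he i
    filter_upwards [hae] with ω hω
    show (ω ∈ ⋂ i ∈ S, g i ⁻¹' sets i) = (ω ∈ ⋂ i ∈ S, f i ⁻¹' sets i)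
    simp only [Set.mem_iInter, Set.mem_preimage, eq_iff_iff]
    constructor
    · intro hmem i hi
      rw [hω i hi]; exact hmem i hi
    · intro hmem i hi
      rw [← hω i hi]; exact hmem i hi
  rw [h2, hS]
  exact (Finset.prod_congr rfl h1).symm

/-- ℕ-indexed independence of increments from the Fin-indexed hypothesis -/
lemma natIndep {W : ℝ → Ω → ℝ}
    (h4 : ∀ (m : ℕ) (u : ℕ → ℝ), Monotone u → (∀ j, 0 ≤ u j) →
      iIndepFun (m := fun _ => inferInstance)
        (fun j : Fin m => fun ω => W (u (j + 1)) ω - W (u j) ω) P)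
    (u : ℕ → ℝ) (hu : Monotone u) (h0 : ∀ j, 0 ≤ u j) :
    iIndepFun (m := fun _ => inferInstance)
      (fun j : ℕ => fun ω => W (u (j + 1)) ω - W (u j) ω) P := by
  rw [iIndepFun_iff_measure_inter_preimage_eq_mul]
  intro S sets hsets
  set m := S.sup id + 1 with hm
  have hlt : ∀ i ∈ S, i < m := fun i hi =>
    Nat.lt_succ_of_le (Finset.le_sup (f := id) hi)
  have h := h4 m u hu h0
  rw [iIndepFun_iff_measure_inter_preimage_eq_mul] at h
  have key := h (S.attachFin hlt) (sets := fun j : Fin m => sets (j : ℕ))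
    (fun j hj => hsets j ((Finset.mem_attachFin hlt).mp hj))
  have hInter : (⋂ j ∈ S.attachFin hlt,
        (fun ω => W (u ((j : ℕ) + 1)) ω - W (u (j : ℕ)) ω) ⁻¹' sets (j : ℕ))
      = ⋂ i ∈ S, (fun ω => W (u (i + 1)) ω - W (u i) ω) ⁻¹' sets i := by
    ext ω
    simp only [Set.mem_iInter]
    constructor
    · intro hh i hi
      exact hh ⟨i, hlt i hi⟩ ((Finset.mem_attachFin hlt).mpr hi)
    · intro hh j hj
      exact hh (j : ℕ) ((Finset.mem_attachFin hlt).mp hj)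
  have hProd : (∏ j ∈ S.attachFin hlt,
        P ((fun ω => W (u ((j : ℕ) + 1)) ω - W (u (j : ℕ)) ω) ⁻¹' sets (j : ℕ)))
      = ∏ i ∈ S, P ((fun ω => W (u (i + 1)) ω - W (u i) ω) ⁻¹' sets i) := by
    refine Finset.prod_bij (fun (j : Fin m) _ => (j : ℕ)) ?_ ?_ ?_ ?_
    · intro j hj; exact (Finset.mem_attachFin hlt).mp hj
    · intro j₁ h₁ j₂ h₂ hh; exact Fin.val_injective hh
    · intro i hi; exact ⟨⟨i, hlt i hi⟩, (Finset.mem_attachFin hlt).mpr hi, rfl⟩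
    · intro j hj; rfl
  rw [← hInter, ← hProd]
  exact key

lemma levy_ineq [IsProbabilityMeasure P] (X : ℕ → Ω → ℝ)
    (hX : ∀ i, Measurable (X i))
    (hind : iIndepFun (m := fun _ => inferInstance) X P) (M : ℕ)
    (hsym : ∀ k, k ≤ M → (2 : ℝ≥0∞)⁻¹ ≤ P {ω | 0 ≤ ∑ i ∈ Finset.Ico k M, X i ω})
    (z : ℝ) (hz : 0 < z) :
    P {ω | ∃ k, k ≤ M ∧ z ≤ ∑ i ∈ Finset.range k, X i ω}
      ≤ 2 * P {ω | z ≤ ∑ i ∈ Finset.range M, X i ω} := by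
  classical
  set S : ℕ → Ω → ℝ := fun k ω => ∑ i ∈ Finset.range k, X i ω with hS
  have hSmeas : ∀ k, Measurable (S k) := fun k =>
    Finset.measurable_sum _ (fun i _ => hX i)
  set A : ℕ → Set Ω := fun k => {ω | z ≤ S k ω ∧ ∀ i, i < k → S i ω < z} with hA
  have hAmeas : ∀ k, MeasurableSet (A k) := by
    intro k
    have h1 : A k = {ω | z ≤ S k ω} ∩ ⋂ i ∈ Finset.range k, {ω | S i ω < z} := by
      ext ω
      simp only [hA, Set.mem_setOf_eq, Set.mem_inter_iff, Set.mem_iInter, Finset.mem_range]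
    rw [h1]
    exact (measurableSet_le measurable_const (hSmeas k)).inter
      (MeasurableSet.biInter (Finset.range k).countable_toSet
        (fun i _ => measurableSet_lt (hSmeas i) measurable_const))
  have hsub : {ω | ∃ k, k ≤ M ∧ z ≤ S k ω} ⊆ ⋃ k ∈ Finset.range (M + 1), A k := by
    intro ω hω
    obtain ⟨k, hkM, hk⟩ := hω
    have hex : ∃ j, z ≤ S j ω := ⟨k, hk⟩
    have hjk : Nat.find hex ≤ k := Nat.find_min' hex hk
    refine Set.mem_biUnion (Finset.mem_range.mpr (Nat.lt_succ_of_le (hjk.trans hkM))) ?_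
    refine ⟨Nat.find_spec hex, fun i hi => ?_⟩
    have := Nat.find_min hex hi
    push_neg at this
    exact this
  have hdisj : (↑(Finset.range (M + 1)) : Set ℕ).PairwiseDisjoint A := by
    have key : ∀ a b, a < b → Disjoint (A a) (A b) := by
      intro a b hlt
      refine Set.disjoint_left.mpr ?_
      intro ω hωa hωb
      exact absurd hωa.1 (not_le.mpr (hωb.2 a hlt))
    intro a _ b _ hab
    rcases hab.lt_or_gt with h | h
    · exact key a b h
    · exact (key b a h).symm
  set B : ℕ → Set Ω := fun k => {ω | 0 ≤ ∑ i ∈ Finset.Ico k M, X i ω} with hB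
  have hBmeas : ∀ k, MeasurableSet (B k) :=
    fun k => measurableSet_le measurable_const (Finset.measurable_sum _ (fun i _ => hX i))
  have hkey : ∀ k, k ≤ M → P (A k) ≤ 2 * P (A k ∩ B k) := by
    intro k hkM
    have hIF : IndepFun (fun ω (i : {x // x ∈ Finset.range k}) => X i ω)
        (fun ω (i : {x // x ∈ Finset.Ico k M}) => X i ω) P := by
      refine iIndepFun.indepFun_finset (Finset.range k) (Finset.Ico k M) ?_ hind hX
      refine Finset.disjoint_left.mpr ?_
      intro a ha hb
      rw [Finset.mem_range] at ha
      rw [Finset.mem_Ico] at hb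
      omega
    have hψm : Measurable (fun v : {x // x ∈ Finset.Ico k M} → ℝ => ∑ i, v i) :=
      Finset.measurable_sum _ (fun i _ => measurable_pi_apply i)
    have hIF2 : IndepFun (fun ω (i : {x // x ∈ Finset.range k}) => X i ω)
        (fun ω => ∑ i : {x // x ∈ Finset.Ico k M}, X i ω) P :=
      hIF.comp measurable_id hψm
    set C : Set ({x // x ∈ Finset.range k} → ℝ) :=
      {v | z ≤ ∑ i : {x // x ∈ Finset.range k}, v i} ∩
        ⋂ j ∈ Finset.range k,
          {v | (∑ i : {x // x ∈ Finset.range k}, (if (i : ℕ) < j then v i else 0)) < z} with hC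
    have hCmeas : MeasurableSet C := by
      have hmeas1 : Measurable fun (v : {x // x ∈ Finset.range k} → ℝ) =>
          ∑ i : {x // x ∈ Finset.range k}, v i :=
        Finset.measurable_sum _ (fun i _ => measurable_pi_apply i)
      refine (measurableSet_le measurable_const hmeas1).inter ?_
      refine MeasurableSet.biInter (Finset.range k).countable_toSet (fun j _ => ?_)
      refine measurableSet_lt ?_ measurable_const
      refine Finset.measurable_sum _ (fun i _ => ?_)
      by_cases hij : (i : ℕ) < j
      · simpa [hij] using measurable_pi_apply i
      · simpa [hij] using measurable_const
    have hsum_restrict : ∀ ω (j : ℕ), j ≤ k →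
        (∑ i : {x // x ∈ Finset.range k}, (if (i : ℕ) < j then X (i : ℕ) ω else 0)) = S j ω := by
      intro ω j hj
      rw [Finset.sum_coe_sort (Finset.range k) (fun i => if i < j then X i ω else 0)]
      rw [← Finset.sum_filter]
      have hfil : (Finset.range k).filter (fun i => i < j) = Finset.range j := by
        ext i
        simp only [Finset.mem_filter, Finset.mem_range]
        omega
      rw [hfil]
    have hApre : A k = (fun ω (i : {x // x ∈ Finset.range k}) => X i ω) ⁻¹' C := by
      ext ω
      simp only [hA, hC, Set.mem_setOf_eq, Set.mem_preimage, Set.mem_inter_iff,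
        Set.mem_iInter, Finset.mem_range]
      constructor
      · rintro ⟨h1, h2⟩
        refine ⟨?_, fun j hj => ?_⟩
        · rw [Finset.sum_coe_sort (Finset.range k) (fun i => X i ω)]; exact h1
        · rw [hsum_restrict ω j hj.le]
          exact h2 j hj
      · rintro ⟨h1, h2⟩
        refine ⟨?_, fun j hj => ?_⟩
        · rw [Finset.sum_coe_sort (Finset.range k) (fun i => X i ω)] at h1; exact h1
        · have := h2 j hj
          rw [hsum_restrict ω j hj.le] at this
          exact this
    have hBpre : B k = (fun ω => ∑ i : {x // x ∈ Finset.Ico k M}, X i ω) ⁻¹' (Set.Ici 0) := by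
      ext ω
      simp only [hB, Set.mem_setOf_eq, Set.mem_preimage, Set.mem_Ici]
      rw [Finset.sum_coe_sort (Finset.Ico k M) (fun i => X i ω)]
    have hprod : P (A k ∩ B k) = P (A k) * P (B k) := by
      rw [hApre, hBpre]
      exact hIF2.measure_inter_preimage_eq_mul _ _ hCmeas measurableSet_Ici
    calc P (A k) = P (A k) * 1 := (mul_one _).symm
      _ = P (A k) * (2 * 2⁻¹) := by rw [ENNReal.mul_inv_cancel (by norm_num) (by norm_num)]
      _ = 2 * (P (A k) * 2⁻¹) := by ring
      _ ≤ 2 * (P (A k) * P (B k)) := by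
          gcongr
          exact hsym k hkM
      _ = 2 * P (A k ∩ B k) := by rw [hprod]
  have hABsub : ∀ k, k ≤ M → A k ∩ B k ⊆ {ω | z ≤ S M ω} := by
    intro k hkM ω hω
    have h1 : z ≤ S k ω := hω.1.1
    have h2 : (0 : ℝ) ≤ ∑ i ∈ Finset.Ico k M, X i ω := hω.2
    have h3 : S k ω + ∑ i ∈ Finset.Ico k M, X i ω = S M ω :=
      Finset.sum_range_add_sum_Ico _ hkM
    show z ≤ S M ω
    linarith
  calc P {ω | ∃ k, k ≤ M ∧ z ≤ S k ω}
      ≤ P (⋃ k ∈ Finset.range (M + 1), A k) := measure_mono hsub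
    _ = ∑ k ∈ Finset.range (M + 1), P (A k) :=
        measure_biUnion_finset hdisj (fun k _ => hAmeas k)
    _ ≤ ∑ k ∈ Finset.range (M + 1), 2 * P (A k ∩ B k) := by
        refine Finset.sum_le_sum (fun k hk => hkey k ?_)
        rw [Finset.mem_range] at hk
        omega
    _ = 2 * ∑ k ∈ Finset.range (M + 1), P (A k ∩ B k) := by
        rw [Finset.mul_sum]
    _ = 2 * P (⋃ k ∈ Finset.range (M + 1), (A k ∩ B k)) := by
        rw [measure_biUnion_finset
          (hdisj.mono (fun k => Set.inter_subset_left))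
          (fun k _ => (hAmeas k).inter (hBmeas k))]
    _ ≤ 2 * P {ω | z ≤ S M ω} := by
        gcongr
        refine Set.iUnion₂_subset (fun k hk => hABsub k ?_)
        rw [Finset.mem_range] at hk
        omega

lemma blockBound [IsProbabilityMeasure P] {W : ℝ → Ω → ℝ}
    (hW : IsBrownianMotion P W)
    (g : ℝ → Ω → ℝ) (hgm : ∀ t, Measurable (g t)) (hge : ∀ t, 0 ≤ t → g t =ᵐ[P] W t)
    (a b V z : ℝ) (ha : 0 ≤ a) (hbV : b - a ≤ V) (hV : 0 < V) (hz : 0 < z) :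
    P {ω | ∃ t ∈ Set.Icc a b, z < |W t ω - W a ω|}
      ≤ 4 * ENNReal.ofReal (rexp (-z ^ 2 / (2 * V))) := by
  classical
  rcases le_or_gt b a with hba | hlt
  · have hempty : {ω | ∃ t ∈ Set.Icc a b, z < |W t ω - W a ω|} = ∅ := by
      ext ω
      simp only [Set.mem_setOf_eq, Set.mem_empty_iff_false, iff_false, not_exists, not_and]
      intro t ht
      have hta : t = a := le_antisymm (ht.2.trans hba) ht.1
      subst hta
      simp only [sub_self, abs_zero, not_lt]
      exact hz.le
    rw [hempty]
    simp
  set H : ℝ := b - a with hH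
  have hHpos : 0 < H := by simp [hH, hlt]
  set pt : ℕ → ℕ → ℝ := fun m i => a + (i : ℝ) * (H / 2 ^ m) with hpt
  have hptnn : ∀ m i, 0 ≤ pt m i := by
    intro m i
    have : (0 : ℝ) ≤ (i : ℝ) * (H / 2 ^ m) := by positivity
    simp only [hpt]
    linarith
  have hpt0 : ∀ m, pt m 0 = a := by intro m; simp [hpt]
  have hptM : ∀ m, pt m (2 ^ m) = b := by
    intro m
    have h2 : ((2 : ℝ) ^ m) ≠ 0 := by positivity
    simp only [hpt, Nat.cast_pow, Nat.cast_ofNat]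
    field_simp
    ring
  set E : ℕ → Set Ω := fun m =>
    {ω | ∃ i, i ≤ 2 ^ m ∧ z < |g (pt m i) ω - g a ω|} with hE
  have hEmono : Monotone E := by
    refine monotone_nat_of_le_succ (fun m ω hω => ?_)
    obtain ⟨i, hi, hval⟩ := hω
    refine ⟨2 * i, by rw [pow_succ]; omega, ?_⟩
    have hpteq : pt (m + 1) (2 * i) = pt m i := by
      simp only [hpt, Nat.cast_mul, Nat.cast_ofNat]
      rw [pow_succ]
      field_simp
    rwa [hpteq]
  -- null set
  set N : Set Ω := ⋃ q : ℕ × ℕ, {ω | g (pt q.1 q.2) ω ≠ W (pt q.1 q.2) ω} with hNdef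
  have hNnull : P N = 0 := by
    refine measure_iUnion_null (fun q => ?_)
    have := hge (pt q.1 q.2) (hptnn q.1 q.2)
    rw [Filter.EventuallyEq, ae_iff] at this
    exact this
  -- inclusion in the union of grid events
  have hGsub : {ω | ∃ t ∈ Set.Icc a b, z < |W t ω - W a ω|} ⊆ (⋃ m, E m) ∪ N := by
    intro ω hω
    by_cases hmemN : ω ∈ N
    · exact Or.inr hmemN
    refine Or.inl ?_
    have hgWpt : ∀ m i, g (pt m i) ω = W (pt m i) ω := by
      intro m i
      by_contra hne
      exact hmemN (Set.mem_iUnion.mpr ⟨(m, i), hne⟩)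
    obtain ⟨t, ⟨hta, htb⟩, hzt⟩ := hω
    set idx : ℕ → ℕ := fun m => ⌊(t - a) * 2 ^ m / H⌋₊ with hidx
    have hidxle : ∀ m, idx m ≤ 2 ^ m := by
      intro m
      have h1 : (t - a) * 2 ^ m / H ≤ ((2 ^ m : ℕ) : ℝ) := by
        push_cast
        rw [div_le_iff₀ hHpos]
        have : t - a ≤ H := by simp only [hH]; linarith
        nlinarith [pow_pos (show (0:ℝ) < 2 by norm_num) m]
      calc idx m ≤ ⌊((2 ^ m : ℕ) : ℝ)⌋₊ := Nat.floor_mono h1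
        _ = 2 ^ m := Nat.floor_natCast _
    have hdist : ∀ m, |pt m (idx m) - t| ≤ H * (1 / 2) ^ m := by
      intro m
      have h2pos : (0 : ℝ) < 2 ^ m := by positivity
      have hdpos : (0 : ℝ) < H / 2 ^ m := div_pos hHpos h2pos
      have hnn : 0 ≤ (t - a) * 2 ^ m / H := by
        apply div_nonneg _ hHpos.le
        have : 0 ≤ t - a := by linarith
        positivity
      have hfl1 : ((idx m : ℝ)) ≤ (t - a) * 2 ^ m / H := Nat.floor_le hnn
      have hfl2 : (t - a) * 2 ^ m / H < (idx m : ℝ) + 1 := Nat.lt_floor_add_one _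
      have hup : (idx m : ℝ) * (H / 2 ^ m) ≤ t - a := by
        calc (idx m : ℝ) * (H / 2 ^ m)
            ≤ ((t - a) * 2 ^ m / H) * (H / 2 ^ m) :=
              mul_le_mul_of_nonneg_right hfl1 hdpos.le
          _ = t - a := by field_simp
      have hlow : t - a - H / 2 ^ m < (idx m : ℝ) * (H / 2 ^ m) := by
        have h2 := mul_lt_mul_of_pos_right hfl2 hdpos
        have heq : ((t - a) * 2 ^ m / H) * (H / 2 ^ m) = t - a := by field_simp
        rw [heq] at h2
        nlinarith
      have hdiff : pt m (idx m) - t = (idx m : ℝ) * (H / 2 ^ m) - (t - a) := by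
        simp only [hpt]
        ring
      have hd2 : H * (1 / 2) ^ m = H / 2 ^ m := by
        rw [div_pow, one_pow, mul_one_div]
      rw [hdiff, hd2, abs_le]
      constructor
      · linarith
      · linarith
    have htend : Filter.Tendsto (fun m => pt m (idx m)) atTop (nhds t) := by
      rw [tendsto_iff_dist_tendsto_zero]
      have h0 := tendsto_pow_atTop_nhds_zero_of_lt_one
        (by norm_num : (0:ℝ) ≤ (1/2:ℝ)) (by norm_num : (1/2:ℝ) < 1)
      have h1 := h0.const_mul H
      rw [mul_zero] at h1
      exact squeeze_zero (fun m => dist_nonneg)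
        (fun m => by rw [Real.dist_eq]; exact hdist m) h1
    have hcont : Continuous fun s => W s ω := hW.2.1 ω
    have htendW : Filter.Tendsto (fun m => |W (pt m (idx m)) ω - W a ω|) atTop
        (nhds (|W t ω - W a ω|)) := by
      have h1 := (hcont.tendsto t).comp htend
      exact ((h1.sub tendsto_const_nhds).abs)
    have hev := htendW.eventually (eventually_gt_nhds hzt)
    obtain ⟨m, hm⟩ := hev.exists
    refine Set.mem_iUnion.mpr ⟨m, ⟨idx m, hidxle m, ?_⟩⟩
    rw [hgWpt m (idx m)]
    have hga : g a ω = W a ω := by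
      have := hgWpt m 0
      rwa [hpt0 m] at this
    rw [hga]
    exact hm
  -- per-level bound via Lévy's inequality
  have hEbound : ∀ m, P (E m) ≤ 4 * ENNReal.ofReal (rexp (-z ^ 2 / (2 * V))) := by
    intro m
    set M : ℕ := 2 ^ m with hM
    have h2pos : (0 : ℝ) < 2 ^ m := by positivity
    set u : ℕ → ℝ := fun j => pt m (min j M) with hu
    have hdnn : (0 : ℝ) ≤ H / 2 ^ m := (div_pos hHpos h2pos).le
    have humono : Monotone u := by
      intro j k hjk
      simp only [hu, hpt]
      have h1 : ((min j M : ℕ) : ℝ) ≤ ((min k M : ℕ) : ℝ) := by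
        exact_mod_cast min_le_min hjk (le_refl M)
      nlinarith
    have hu0 : ∀ j, 0 ≤ u j := fun j => hptnn _ _
    have huzero : u 0 = a := by
      simp only [hu, Nat.zero_min]
      exact hpt0 m
    have huM : u M = b := by
      simp only [hu, min_self]
      exact hptM m
    have hui : ∀ i, i ≤ M → u i = pt m i := by
      intro i hi
      simp only [hu, min_eq_left hi]
    set X : ℕ → Ω → ℝ := fun j ω => g (u (j + 1)) ω - g (u j) ω with hX
    have hXmeas : ∀ j, Measurable (X j) := fun j => (hgm _).sub (hgm _)
    have hXae : ∀ j, (fun ω => W (u (j + 1)) ω - W (u j) ω) =ᵐ[P] X j := by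
      intro j
      filter_upwards [hge (u (j + 1)) (hu0 _), hge (u j) (hu0 _)] with ω h1 h2
      simp only [hX]
      rw [h1, h2]
    have hXind : iIndepFun (m := fun _ => inferInstance) X P :=
      iIndepFun_congr (natIndep hW.2.2.2 u humono hu0) hXae
    have hXnegind : iIndepFun (m := fun _ => inferInstance) (fun j ω => -(X j ω)) P :=
      hXind.comp (fun _ => fun x : ℝ => -x) (fun _ => measurable_neg)
    have hsumX : ∀ (k : ℕ) ω, ∑ i ∈ Finset.range k, X i ω = g (u k) ω - g (u 0) ω :=
      fun k ω => Finset.sum_range_sub (fun j => g (u j) ω) k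
    have hlaw : ∀ k, k ≤ M → P.map (fun ω => g (u M) ω - g (u k) ω)
        = gaussianReal 0 ((u M - u k).toNNReal) := by
      intro k hk
      have hae : (fun ω => g (u M) ω - g (u k) ω)
          =ᵐ[P] (fun ω => W (u M) ω - W (u k) ω) := by
        filter_upwards [hge (u M) (hu0 _), hge (u k) (hu0 _)] with ω h1 h2
        rw [h1, h2]
      rw [Measure.map_congr hae]
      exact hW.2.2.1 (u k) (u M) (hu0 k) (humono hk)
    have hlawneg : ∀ k, k ≤ M → P.map (fun ω => g (u k) ω - g (u M) ω)
        = gaussianReal 0 ((u M - u k).toNNReal) := by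
      intro k hk
      have hcomp : (fun ω => g (u k) ω - g (u M) ω)
          = (fun x : ℝ => -x) ∘ (fun ω => g (u M) ω - g (u k) ω) := by
        funext ω
        simp only [Function.comp_apply]
        ring
      rw [hcomp, ← Measure.map_map (f := fun ω => g (u M) ω - g (u k) ω) measurable_neg ((hgm _).sub (hgm _)), hlaw k hk,
        gauss_map_neg]
    have hIci : MeasurableSet {x : ℝ | (0:ℝ) ≤ x} := measurableSet_Ici
    have hsymP : ∀ k, k ≤ M → (2 : ℝ≥0∞)⁻¹ ≤ P {ω | 0 ≤ ∑ i ∈ Finset.Ico k M, X i ω} := by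
      intro k hk
      have hset : {ω | 0 ≤ ∑ i ∈ Finset.Ico k M, X i ω}
          = (fun ω => g (u M) ω - g (u k) ω) ⁻¹' {x : ℝ | 0 ≤ x} := by
        ext ω
        simp only [Set.mem_setOf_eq, Set.mem_preimage]
        rw [Finset.sum_Ico_eq_sub _ hk, hsumX M ω, hsumX k ω]
        constructor <;> intro h <;> linarith
      rw [hset, ← Measure.map_apply (f := fun ω => g (u M) ω - g (u k) ω) ((hgm _).sub (hgm _)) hIci, hlaw k hk]
      exact gauss_half _
    have hsymN : ∀ k, k ≤ M →
        (2 : ℝ≥0∞)⁻¹ ≤ P {ω | 0 ≤ ∑ i ∈ Finset.Ico k M, -(X i ω)} := by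
      intro k hk
      have hset : {ω | 0 ≤ ∑ i ∈ Finset.Ico k M, -(X i ω)}
          = (fun ω => g (u k) ω - g (u M) ω) ⁻¹' {x : ℝ | 0 ≤ x} := by
        ext ω
        simp only [Set.mem_setOf_eq, Set.mem_preimage, Finset.sum_neg_distrib]
        rw [Finset.sum_Ico_eq_sub _ hk, hsumX M ω, hsumX k ω]
        constructor <;> intro h <;> linarith
      rw [hset, ← Measure.map_apply (f := fun ω => g (u k) ω - g (u M) ω) ((hgm _).sub (hgm _)) hIci, hlawneg k hk]
      exact gauss_half _
    have hEsub : E m ⊆ {ω | ∃ k, k ≤ M ∧ z ≤ ∑ i ∈ Finset.range k, X i ω}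
        ∪ {ω | ∃ k, k ≤ M ∧ z ≤ ∑ i ∈ Finset.range k, -(X i ω)} := by
      intro ω hω
      obtain ⟨i, hi, hval⟩ := hω
      have hgpt : g (pt m i) ω = g (u i) ω := by rw [hui i hi]
      have hga : g a ω = g (u 0) ω := by rw [huzero]
      rw [hgpt, hga, ← hsumX i ω] at hval
      rcases lt_abs.mp hval with h | h
      · exact Or.inl ⟨i, hi, h.le⟩
      · refine Or.inr ⟨i, hi, ?_⟩
        rw [Finset.sum_neg_distrib]
        exact h.le
    have htailP : P {ω | z ≤ ∑ i ∈ Finset.range M, X i ω}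
        ≤ ENNReal.ofReal (rexp (-z ^ 2 / (2 * V))) := by
      have hset : {ω | z ≤ ∑ i ∈ Finset.range M, X i ω}
          = (fun ω => g (u M) ω - g (u 0) ω) ⁻¹' {x : ℝ | z ≤ x} := by
        ext ω
        simp only [Set.mem_setOf_eq, Set.mem_preimage]
        rw [hsumX M ω]
      have hIciz : MeasurableSet {x : ℝ | z ≤ x} := measurableSet_Ici
      rw [hset, ← Measure.map_apply (f := fun ω => g (u M) ω - g (u 0) ω) ((hgm _).sub (hgm _)) hIciz, hlaw 0 (Nat.zero_le _)]
      refine (gauss_tail _ z hz.le).trans ?_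
      apply ENNReal.ofReal_le_ofReal
      apply Real.exp_le_exp.mpr
      have hcoe : (((u M - u 0).toNNReal : ℝ≥0) : ℝ) = H := by
        rw [Real.coe_toNNReal _ (by rw [huM, huzero]; linarith)]
        rw [huM, huzero]
      rw [hcoe]
      rw [neg_div, neg_div, neg_le_neg_iff]
      gcongr

    have htailN : P {ω | z ≤ ∑ i ∈ Finset.range M, -(X i ω)}
        ≤ ENNReal.ofReal (rexp (-z ^ 2 / (2 * V))) := by
      have hset : {ω | z ≤ ∑ i ∈ Finset.range M, -(X i ω)}
          = (fun ω => g (u 0) ω - g (u M) ω) ⁻¹' {x : ℝ | z ≤ x} := by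
        ext ω
        simp only [Set.mem_setOf_eq, Set.mem_preimage, Finset.sum_neg_distrib]
        rw [hsumX M ω]
        constructor <;> intro h <;> linarith
      have hIciz : MeasurableSet {x : ℝ | z ≤ x} := measurableSet_Ici
      rw [hset, ← Measure.map_apply (f := fun ω => g (u 0) ω - g (u M) ω) ((hgm _).sub (hgm _)) hIciz, hlawneg 0 (Nat.zero_le _)]
      refine (gauss_tail _ z hz.le).trans ?_
      apply ENNReal.ofReal_le_ofReal
      apply Real.exp_le_exp.mpr
      have hcoe : (((u M - u 0).toNNReal : ℝ≥0) : ℝ) = H := by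
        rw [Real.coe_toNNReal _ (by rw [huM, huzero]; linarith)]
        rw [huM, huzero]
      rw [hcoe]
      rw [neg_div, neg_div, neg_le_neg_iff]
      gcongr

    calc P (E m)
        ≤ P ({ω | ∃ k, k ≤ M ∧ z ≤ ∑ i ∈ Finset.range k, X i ω}
            ∪ {ω | ∃ k, k ≤ M ∧ z ≤ ∑ i ∈ Finset.range k, -(X i ω)}) :=
          measure_mono hEsub
      _ ≤ P {ω | ∃ k, k ≤ M ∧ z ≤ ∑ i ∈ Finset.range k, X i ω}
            + P {ω | ∃ k, k ≤ M ∧ z ≤ ∑ i ∈ Finset.range k, -(X i ω)} :=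
          measure_union_le _ _
      _ ≤ 2 * P {ω | z ≤ ∑ i ∈ Finset.range M, X i ω}
            + 2 * P {ω | z ≤ ∑ i ∈ Finset.range M, -(X i ω)} := by
          gcongr
          · exact levy_ineq X hXmeas hXind M hsymP z hz
          · exact levy_ineq (fun j ω => -(X j ω)) (fun j => (hXmeas j).neg)
              hXnegind M hsymN z hz
      _ ≤ 2 * ENNReal.ofReal (rexp (-z ^ 2 / (2 * V)))
            + 2 * ENNReal.ofReal (rexp (-z ^ 2 / (2 * V))) := by
          gcongr
      _ = 4 * ENNReal.ofReal (rexp (-z ^ 2 / (2 * V))) := by ring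
  calc P {ω | ∃ t ∈ Set.Icc a b, z < |W t ω - W a ω|}
      ≤ P ((⋃ m, E m) ∪ N) := measure_mono hGsub
    _ ≤ P (⋃ m, E m) + P N := measure_union_le _ _
    _ = P (⋃ m, E m) := by rw [hNnull, add_zero]
    _ = ⨆ m, P (E m) := Directed.measure_iUnion hEmono.directed_le
    _ ≤ 4 * ENNReal.ofReal (rexp (-z ^ 2 / (2 * V))) := iSup_le hEbound

end BMaux

section mainproof

open ProbabilityTheory Real Filter BMaux
open scoped NNReal ENNReal

theorem stmt_11 {Ω : Type*} [MeasurableSpace Ω] (P : Measure Ω) [IsProbabilityMeasure P]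
    (W : ℝ → Ω → ℝ) (hW : IsBrownianMotion P W) (Tbar : ℝ) (hTbar : 0 < Tbar) :
    ∃ c κ lam : ℝ, 0 < c ∧ 0 < κ ∧ 0 < lam ∧ ∀ n : ℕ, 2 ≤ n →
      ∃ L : Ω → ℝ, (∀ ω, 0 ≤ L ω) ∧
        (∀ ω, (⨆ δ : Set.Icc (0 : ℝ) ((n : ℝ) * Tbar),
            ((δ : ℝ) + 1) ^ (-(1 : ℝ) / 2) *
              ⨆ p : {p : ℝ × ℝ // 0 ≤ p.1 ∧ 0 ≤ p.2 ∧ p.1 + p.2 ≤ (n : ℝ) * Tbar ∧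
                  p.2 ≤ (δ : ℝ) * Real.log n},
                |W (p.1.1 + p.1.2) ω - W p.1.1 ω|) ≤ c * Real.log n + L ω) ∧
        ∀ x : ℝ, 0 ≤ x → P {ω | L ω > x} ≤
          ENNReal.ofReal (κ * (n : ℝ) ^ (-(2 : ℝ)) *
            Real.exp (-lam * x - x ^ 2 / (18 * Real.log n))) := by
  classical
  have hlog2 : 0 < Real.log 2 := Real.log_pos (by norm_num)
  refine ⟨8, 4 * (Tbar + 1) * (Tbar / Real.log 2 + 1), 1, by norm_num, by positivity,
    one_pos, ?_⟩
  intro n hn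
  set ℓ : ℝ := Real.log n with hldef
  have hn2 : (2 : ℝ) ≤ (n : ℝ) := by exact_mod_cast hn
  have hn1 : (1 : ℝ) ≤ (n : ℝ) := by linarith
  have hnpos : (0 : ℝ) < (n : ℝ) := by linarith
  have hlpos : 0 < ℓ := Real.log_pos (by linarith)
  have hllog2 : Real.log 2 ≤ ℓ := Real.log_le_log (by norm_num) hn2
  set T : ℝ := (n : ℝ) * Tbar with hTdef
  have hTpos : 0 < T := by positivity
  -- measurable a.e.-versions of W t
  have haem : ∀ t : ℝ, 0 ≤ t → AEMeasurable (fun ω => W t ω) P := by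
    intro t ht
    by_contra hnm
    have hmap := hW.2.2.1 0 t le_rfl ht
    have h0 : (fun ω => W t ω - W 0 ω) = fun ω => W t ω := by
      funext ω
      rw [hW.1 ω, sub_zero]
    rw [h0, Measure.map_of_not_aemeasurable hnm] at hmap
    have h1 : (0 : Measure ℝ) Set.univ
        = gaussianReal 0 (Real.toNNReal (t - 0)) Set.univ := by rw [hmap]
    simp at h1
  have hgex : ∀ t : ℝ, ∃ gt : Ω → ℝ, Measurable gt ∧ (0 ≤ t → gt =ᵐ[P] W t) := by
    intro t
    by_cases ht : 0 ≤ t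
    · exact ⟨(haem t ht).mk _, (haem t ht).measurable_mk,
        fun _ => ((haem t ht).ae_eq_mk).symm⟩
    · exact ⟨fun _ => 0, measurable_const, fun h => absurd h ht⟩
  choose g hgm hge using hgex
  -- the random variable
  set Lam : Ω → ℝ := fun ω => (⨆ δ : Set.Icc (0 : ℝ) ((n : ℝ) * Tbar),
      ((δ : ℝ) + 1) ^ (-(1 : ℝ) / 2) *
        ⨆ p : {p : ℝ × ℝ // 0 ≤ p.1 ∧ 0 ≤ p.2 ∧ p.1 + p.2 ≤ (n : ℝ) * Tbar ∧
            p.2 ≤ (δ : ℝ) * Real.log n},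
          |W (p.1.1 + p.1.2) ω - W p.1.1 ω|) with hLam
  refine ⟨fun ω => max (Lam ω - 8 * Real.log n) 0, fun ω => le_max_right _ _,
    fun ω => ?_, ?_⟩
  · have h1 := le_max_left (Lam ω - 8 * Real.log n) 0
    show Lam ω ≤ 8 * Real.log n + max (Lam ω - 8 * Real.log n) 0
    linarith
  intro x hx
  set y : ℝ := 8 * ℓ + x with hydef
  have hypos : 0 < y := by positivity
  set J : ℕ := ⌊T⌋₊ with hJdef
  set I : ℕ := ⌊T / ℓ⌋₊ with hIdef
  set θ : ℕ → ℝ := fun j => ((j : ℝ) + 1) * ℓ with hθdef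
  have hθpos : ∀ j, 0 < θ j := fun j => by positivity
  set av : ℕ → ℕ → ℝ := fun j i => (i : ℝ) * θ j with havdef
  set bv : ℕ → ℕ → ℝ := fun j i => min (av j i + 2 * θ j) T with hbvdef
  set zv : ℕ → ℝ := fun j => y * Real.sqrt ((j : ℝ) + 1) / 2 with hzvdef
  have hzvpos : ∀ j, 0 < zv j := by
    intro j
    have : (0:ℝ) < Real.sqrt ((j : ℝ) + 1) := Real.sqrt_pos.mpr (by positivity)
    positivity
  set G : ℕ → ℕ → Set Ω := fun j i =>
    {ω | ∃ t ∈ Set.Icc (av j i) (bv j i), zv j < |W t ω - W (av j i) ω|} with hGdef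
  -- deterministic inclusion
  have hsub : {ω | max (Lam ω - 8 * Real.log n) 0 > x}
      ⊆ ⋃ j ∈ Finset.range (J + 1), ⋃ i ∈ Finset.range (I + 1), G j i := by
    intro ω hω
    by_contra hnot
    simp only [Set.mem_iUnion, not_exists] at hnot
    have hnot' : ∀ j, j ≤ J → ∀ i, i ≤ I → ω ∉ G j i := by
      intro j hj i hi
      exact hnot j (Finset.mem_range.mpr (Nat.lt_succ_of_le hj)) i
        (Finset.mem_range.mpr (Nat.lt_succ_of_le hi))
    have hgt : y < Lam ω := by
      have hω' : x < max (Lam ω - 8 * Real.log n) 0 := hω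
      rcases lt_max_iff.mp hω' with h | h
      · rw [hydef, hldef]; linarith
      · exact absurd h (not_lt.mpr hx)
    have hley : Lam ω ≤ y := by
      rw [hLam]
      refine Real.iSup_le (fun δ => ?_) hypos.le
      obtain ⟨δv, hδ0, hδT⟩ := δ
      simp only
      set j : ℕ := ⌊δv⌋₊ with hjdef
      have hjJ : j ≤ J := Nat.floor_mono hδT
      have hδj1 : δv ≤ (j : ℝ) + 1 := (Nat.lt_floor_add_one δv).le
      have hjδ : (j : ℝ) ≤ δv := Nat.floor_le hδ0
      have hinner : (⨆ p : {p : ℝ × ℝ // 0 ≤ p.1 ∧ 0 ≤ p.2 ∧ p.1 + p.2 ≤ (n : ℝ) * Tbar ∧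
            p.2 ≤ δv * Real.log n},
            |W (p.1.1 + p.1.2) ω - W p.1.1 ω|)
          ≤ y * Real.sqrt (δv + 1) := by
        have hrhs : 0 ≤ y * Real.sqrt (δv + 1) := by positivity
        refine Real.iSup_le (fun p => ?_) hrhs
        obtain ⟨⟨u, h⟩, hu0, hh0, huhT, hhδ⟩ := p
        simp only
        set i : ℕ := ⌊u / θ j⌋₊ with hidef
        have huT : u ≤ T := by
          have : u ≤ u + h := by linarith
          exact this.trans huhT
        have hiI : i ≤ I := by
          refine Nat.floor_mono ?_
          have h1 : ℓ ≤ θ j := by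
            simp only [hθdef]
            nlinarith [(Nat.cast_nonneg j : (0:ℝ) ≤ (j:ℝ))]
          exact div_le_div₀ hTpos.le huT hlpos h1
        have hau : av j i ≤ u := by
          have hfl := Nat.floor_le (div_nonneg hu0 (hθpos j).le)
          have h2 := mul_le_mul_of_nonneg_right hfl (hθpos j).le
          rw [div_mul_cancel₀ _ (hθpos j).ne'] at h2
          simpa [havdef] using h2
        have hua : u < av j i + θ j := by
          simp only [havdef]
          have h2 := Nat.lt_floor_add_one (u / θ j)
          have h3 := mul_lt_mul_of_pos_right h2 (hθpos j)
          rw [div_mul_cancel₀ _ (hθpos j).ne', add_mul, one_mul, ← hidef] at h3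
          linarith [h3]
        have hhθ : h ≤ θ j := by
          rw [hθdef]
          calc h ≤ δv * ℓ := hhδ
            _ ≤ ((j : ℝ) + 1) * ℓ := mul_le_mul_of_nonneg_right hδj1 hlpos.le
        have hmem1 : u ∈ Set.Icc (av j i) (bv j i) := by
          refine ⟨hau, le_min ?_ huT⟩
          linarith
        have hmem2 : u + h ∈ Set.Icc (av j i) (bv j i) := by
          refine ⟨by linarith, le_min ?_ huhT⟩
          linarith
        have hnG := hnot' j hjJ i hiI
        rw [hGdef] at hnG
        simp only [Set.mem_setOf_eq, not_exists, not_and, not_lt] at hnG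
        have hb1 := hnG (u + h) hmem2
        have hb2 := hnG u hmem1
        have habs : |W (u + h) ω - W u ω| ≤ 2 * zv j := by
          calc |W (u + h) ω - W u ω|
              ≤ |W (u + h) ω - W (av j i) ω| + |W (av j i) ω - W u ω| :=
                abs_sub_le _ _ _
            _ = |W (u + h) ω - W (av j i) ω| + |W u ω - W (av j i) ω| := by
                rw [abs_sub_comm (W (av j i) ω)]
            _ ≤ zv j + zv j := add_le_add hb1 hb2
            _ = 2 * zv j := by ring
        have hzv2 : 2 * zv j = y * Real.sqrt ((j : ℝ) + 1) := by
          rw [hzvdef]; ring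
        calc |W (u + h) ω - W u ω| ≤ 2 * zv j := habs
          _ = y * Real.sqrt ((j : ℝ) + 1) := hzv2
          _ ≤ y * Real.sqrt (δv + 1) := by
              apply mul_le_mul_of_nonneg_left _ hypos.le
              exact Real.sqrt_le_sqrt (by linarith)
      -- finish the outer bound
      have h1pos : (0 : ℝ) < δv + 1 := by linarith
      have hcoeff : (0:ℝ) ≤ (δv + 1) ^ (-(1:ℝ)/2) := Real.rpow_nonneg h1pos.le _
      calc (δv + 1) ^ (-(1:ℝ)/2) * (⨆ p : {p : ℝ × ℝ // 0 ≤ p.1 ∧ 0 ≤ p.2 ∧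
              p.1 + p.2 ≤ (n : ℝ) * Tbar ∧ p.2 ≤ δv * Real.log n},
            |W (p.1.1 + p.1.2) ω - W p.1.1 ω|)
          ≤ (δv + 1) ^ (-(1:ℝ)/2) * (y * Real.sqrt (δv + 1)) :=
            mul_le_mul_of_nonneg_left hinner hcoeff
        _ = y * ((δv + 1) ^ (-(1:ℝ)/2) * (δv + 1) ^ ((1:ℝ)/2)) := by
            rw [Real.sqrt_eq_rpow]
            ring
        _ = y := by
            rw [← Real.rpow_add h1pos]
            norm_num
    linarith
  -- measure estimate
  have hblock : ∀ j i, P (G j i) ≤ 4 * ENNReal.ofReal (rexp (-(y ^ 2) / (16 * ℓ))) := by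
    intro j i
    have hav0 : (0:ℝ) ≤ av j i := by
      simp only [havdef, hθdef]
      positivity
    have hbav : bv j i - av j i ≤ 2 * θ j := by
      have := min_le_left (av j i + 2 * θ j) T
      simp only [hbvdef]
      linarith [this]
    have hbnd := blockBound hW g hgm hge (av j i) (bv j i) (2 * θ j) (zv j)
      hav0 hbav (by positivity) (hzvpos j)
    refine le_trans (le_of_eq ?_) (hbnd.trans (le_of_eq ?_))
    · rfl
    have hsq : Real.sqrt ((j:ℝ) + 1) ^ 2 = (j:ℝ) + 1 := Real.sq_sqrt (by positivity)
    have hexp : -(zv j) ^ 2 / (2 * (2 * θ j)) = -(y ^ 2) / (16 * ℓ) := by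
      simp only [hzvdef, hθdef]
      rw [div_pow, mul_pow, hsq]
      have hj1 : ((j:ℝ) + 1) ≠ 0 := by positivity
      field_simp
      ring
    rw [hexp]
  have hcast : ∀ E' : ℝ, 0 ≤ E' →
      (((J + 1) * (I + 1) : ℕ) : ℝ≥0∞) * (4 * ENNReal.ofReal E')
        = ENNReal.ofReal ((((J:ℝ) + 1) * ((I:ℝ) + 1)) * (4 * E')) := by
    intro E' hE'
    rw [ENNReal.ofReal_mul (by positivity), ENNReal.ofReal_mul (by norm_num : (0:ℝ) ≤ 4)]
    congr 1
    · rw [← ENNReal.ofReal_natCast ((J + 1) * (I + 1))]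
      congr 1
      push_cast
      ring
    · congr 1
      norm_num
  have hreal : (((J:ℝ) + 1) * ((I:ℝ) + 1)) * (4 * rexp (-(y ^ 2) / (16 * ℓ)))
      ≤ 4 * (Tbar + 1) * (Tbar / Real.log 2 + 1) * (n : ℝ) ^ (-(2:ℝ))
        * rexp (-1 * x - x ^ 2 / (18 * Real.log n)) := by
    have hJb : ((J:ℝ) + 1) ≤ (n:ℝ) * (Tbar + 1) := by
      have h1 : (J:ℝ) ≤ T := Nat.floor_le hTpos.le
      have h2 : T = (n:ℝ) * Tbar := hTdef
      nlinarith
    have hIb : ((I:ℝ) + 1) ≤ (n:ℝ) * (Tbar / Real.log 2 + 1) := by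
      have h1 : (I:ℝ) ≤ T / ℓ := Nat.floor_le (by positivity)
      have h2 : T / ℓ ≤ T / Real.log 2 := by gcongr
      have h3 : T / Real.log 2 = (n:ℝ) * (Tbar / Real.log 2) := by
        rw [hTdef]; ring
      nlinarith
    have hE : rexp (-(y ^ 2) / (16 * ℓ))
        = rexp (-(4 * ℓ)) * rexp (-x) * rexp (-(x ^ 2 / (16 * ℓ))) := by
      rw [← Real.exp_add, ← Real.exp_add]
      congr 1
      rw [hydef]
      field_simp
      ring
    have hexpl : rexp ℓ = (n:ℝ) := by
      rw [hldef]
      exact Real.exp_log hnpos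
    have hn4 : rexp (-(4 * ℓ)) * ((n:ℝ) * (n:ℝ)) = (n:ℝ) ^ (-(2:ℝ)) := by
      have h2 : (n:ℝ) ^ (-(2:ℝ)) = rexp (ℓ * -2) := by
        rw [Real.rpow_def_of_pos hnpos, ← hldef]
      rw [h2, ← hexpl, ← Real.exp_add, ← Real.exp_add]
      congr 1
      ring
    have hEle : rexp (-(x ^ 2 / (16 * ℓ))) ≤ rexp (-(x ^ 2 / (18 * ℓ))) := by
      apply Real.exp_le_exp.mpr
      rw [neg_le_neg_iff]
      gcongr
      linarith
    have hsplit : rexp (-1 * x - x ^ 2 / (18 * Real.log n))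
        = rexp (-x) * rexp (-(x ^ 2 / (18 * ℓ))) := by
      rw [← Real.exp_add, ← hldef]
      congr 1
      ring
    calc (((J:ℝ) + 1) * ((I:ℝ) + 1)) * (4 * rexp (-(y ^ 2) / (16 * ℓ)))
        ≤ (((n:ℝ) * (Tbar + 1)) * ((n:ℝ) * (Tbar / Real.log 2 + 1)))
            * (4 * rexp (-(y ^ 2) / (16 * ℓ))) := by
          have hpos : (0:ℝ) ≤ 4 * rexp (-(y ^ 2) / (16 * ℓ)) := by positivity
          apply mul_le_mul_of_nonneg_right _ hpos
          apply mul_le_mul hJb hIb (by positivity) (by positivity)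
      _ = 4 * (Tbar + 1) * (Tbar / Real.log 2 + 1)
            * (rexp (-(4 * ℓ)) * ((n:ℝ) * (n:ℝ))) * (rexp (-x) * rexp (-(x ^ 2 / (16 * ℓ)))) := by
          rw [hE]
          ring
      _ = 4 * (Tbar + 1) * (Tbar / Real.log 2 + 1)
            * (n : ℝ) ^ (-(2:ℝ)) * (rexp (-x) * rexp (-(x ^ 2 / (16 * ℓ)))) := by
          rw [hn4]
      _ ≤ 4 * (Tbar + 1) * (Tbar / Real.log 2 + 1)
            * (n : ℝ) ^ (-(2:ℝ)) * (rexp (-x) * rexp (-(x ^ 2 / (18 * ℓ)))) := by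
          have hc : (0:ℝ) ≤ 4 * (Tbar + 1) * (Tbar / Real.log 2 + 1) * (n : ℝ) ^ (-(2:ℝ)) := by
            have := Real.rpow_nonneg hnpos.le (-(2:ℝ))
            positivity
          apply mul_le_mul_of_nonneg_left _ hc
          exact mul_le_mul_of_nonneg_left hEle (Real.exp_nonneg _)
      _ = 4 * (Tbar + 1) * (Tbar / Real.log 2 + 1) * (n : ℝ) ^ (-(2:ℝ))
            * rexp (-1 * x - x ^ 2 / (18 * Real.log n)) := by
          rw [hsplit]
  calc P {ω | max (Lam ω - 8 * Real.log n) 0 > x}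
      ≤ P (⋃ j ∈ Finset.range (J + 1), ⋃ i ∈ Finset.range (I + 1), G j i) :=
        measure_mono hsub
    _ ≤ ∑ j ∈ Finset.range (J + 1), P (⋃ i ∈ Finset.range (I + 1), G j i) :=
        measure_biUnion_finset_le _ _
    _ ≤ ∑ j ∈ Finset.range (J + 1), ∑ i ∈ Finset.range (I + 1), P (G j i) :=
        Finset.sum_le_sum (fun j _ => measure_biUnion_finset_le _ _)
    _ ≤ ∑ j ∈ Finset.range (J + 1), ∑ i ∈ Finset.range (I + 1),
          4 * ENNReal.ofReal (rexp (-(y ^ 2) / (16 * ℓ))) :=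
        Finset.sum_le_sum (fun j _ => Finset.sum_le_sum (fun i _ => hblock j i))
    _ = (((J + 1) * (I + 1) : ℕ) : ℝ≥0∞) * (4 * ENNReal.ofReal (rexp (-(y ^ 2) / (16 * ℓ)))) := by
        rw [Finset.sum_const, Finset.sum_const, Finset.card_range, Finset.card_range,
          smul_smul, nsmul_eq_mul]
    _ = ENNReal.ofReal ((((J:ℝ) + 1) * ((I:ℝ) + 1)) * (4 * rexp (-(y ^ 2) / (16 * ℓ)))) :=
        hcast _ (Real.exp_nonneg _)
    _ ≤ ENNReal.ofReal (4 * (Tbar + 1) * (Tbar / Real.log 2 + 1) * (n : ℝ) ^ (-(2:ℝ))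
          * rexp (-1 * x - x ^ 2 / (18 * Real.log n))) :=
        ENNReal.ofReal_le_ofReal hreal

end mainproof
end
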